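/- arXiv:1311.6107 — 6 statements merged into one kernel-verified Lean document; each statement's English description precedes it below -/
import Mathlib

section
/- If V : ℝⁿ → ℝ is differentiable at x with gradient ∇V(x) and V satisfies the HJI equation at x, then for every u ∈ ℝᵐ and every w ∈ ℝ^q one has H_V(x, u_V(x), w) ≤ 0 ≤ H_V(x, u, w_V(x)); that is, under the HJI equation the Hamiltonian evaluated at the control policy u_V is nonpositive for every disturbance, and evaluated at the worst-case disturbance w_V it is nonnegative for every control. -/
open Matrix

/-- Matrix–vector multiplication, valued in Euclidean space. -/
noncomputable def mv {a b : ℕ} (M : Matrix (Fin a) (Fin b) ℝ)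
    (v : EuclideanSpace ℝ (Fin b)) : EuclideanSpace ℝ (Fin a) :=
  WithLp.toLp 2 (M.mulVec v)

/-- The control policy `u_V(x) = -(1/2) R⁻¹ g(x)ᵀ ∇V(x)`. -/
noncomputable def uPol {n m : ℕ}
    (g : EuclideanSpace ℝ (Fin n) → Matrix (Fin n) (Fin m) ℝ)
    (R : Matrix (Fin m) (Fin m) ℝ)
    (V : EuclideanSpace ℝ (Fin n) → ℝ)
    (x : EuclideanSpace ℝ (Fin n)) : EuclideanSpace ℝ (Fin m) :=
  (-(1/2 : ℝ)) • mv R⁻¹ (mv (g x)ᵀ (gradient V x))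

/-- The disturbance policy `w_V(x) = (1/(2γ²)) k(x)ᵀ ∇V(x)`. -/
noncomputable def wPol {n q : ℕ}
    (k : EuclideanSpace ℝ (Fin n) → Matrix (Fin n) (Fin q) ℝ)
    (γ : ℝ)
    (V : EuclideanSpace ℝ (Fin n) → ℝ)
    (x : EuclideanSpace ℝ (Fin n)) : EuclideanSpace ℝ (Fin q) :=
  (1/(2*γ^2)) • mv (k x)ᵀ (gradient V x)

/-- The Hamiltonian `H_V(x,u,w)`. -/
noncomputable def Ham {n m q p : ℕ}
    (f : EuclideanSpace ℝ (Fin n) → EuclideanSpace ℝ (Fin n))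
    (g : EuclideanSpace ℝ (Fin n) → Matrix (Fin n) (Fin m) ℝ)
    (k : EuclideanSpace ℝ (Fin n) → Matrix (Fin n) (Fin q) ℝ)
    (h : EuclideanSpace ℝ (Fin n) → EuclideanSpace ℝ (Fin p))
    (R : Matrix (Fin m) (Fin m) ℝ) (γ : ℝ)
    (V : EuclideanSpace ℝ (Fin n) → ℝ)
    (x : EuclideanSpace ℝ (Fin n))
    (u : EuclideanSpace ℝ (Fin m)) (w : EuclideanSpace ℝ (Fin q)) : ℝ :=
  (inner ℝ (gradient V x) (f x + mv (g x) u + mv (k x) w) : ℝ)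
    + ‖h x‖^2 + (inner ℝ u (mv R u) : ℝ) - γ^2 * ‖w‖^2

/-- `V` satisfies the HJI equation at `x`. -/
def HJIAt {n m q p : ℕ}
    (f : EuclideanSpace ℝ (Fin n) → EuclideanSpace ℝ (Fin n))
    (g : EuclideanSpace ℝ (Fin n) → Matrix (Fin n) (Fin m) ℝ)
    (k : EuclideanSpace ℝ (Fin n) → Matrix (Fin n) (Fin q) ℝ)
    (h : EuclideanSpace ℝ (Fin n) → EuclideanSpace ℝ (Fin p))
    (R : Matrix (Fin m) (Fin m) ℝ) (γ : ℝ)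
    (V : EuclideanSpace ℝ (Fin n) → ℝ)
    (x : EuclideanSpace ℝ (Fin n)) : Prop :=
  (inner ℝ (gradient V x) (f x) : ℝ) + ‖h x‖^2
    - (1/4) * (inner ℝ (mv (g x)ᵀ (gradient V x)) (mv R⁻¹ (mv (g x)ᵀ (gradient V x))) : ℝ)
    + (1/(4*γ^2)) * ‖mv (k x)ᵀ (gradient V x)‖^2 = 0

lemma inner_mv_right {a b : ℕ} (M : Matrix (Fin a) (Fin b) ℝ)
    (v : EuclideanSpace ℝ (Fin a)) (u : EuclideanSpace ℝ (Fin b)) :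
    (inner ℝ v (mv M u) : ℝ) = inner ℝ (mv Mᵀ v) u := by
  simp only [mv, PiLp.inner_apply, RCLike.inner_apply, starRingEnd_apply, star_trivial,
    Matrix.mulVec, dotProduct, Finset.mul_sum, Finset.sum_mul, Matrix.transpose_apply]
  rw [Finset.sum_comm]
  apply Finset.sum_congr rfl; intro i _; apply Finset.sum_congr rfl; intro j _; ring

lemma mv_smul {a b : ℕ} (M : Matrix (Fin a) (Fin b) ℝ) (c : ℝ)
    (v : EuclideanSpace ℝ (Fin b)) : mv M (c • v) = c • mv M v := by
  ext i
  simp [mv, Matrix.mulVec, dotProduct, Finset.mul_sum]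
  apply Finset.sum_congr rfl; intro j _; ring

lemma mv_add {a b : ℕ} (M : Matrix (Fin a) (Fin b) ℝ)
    (v u : EuclideanSpace ℝ (Fin b)) : mv M (v + u) = mv M v + mv M u := by
  ext i
  simp [mv, Matrix.mulVec, dotProduct, Finset.sum_add_distrib, mul_add]

lemma inner_mv_posdef {m : ℕ} {R : Matrix (Fin m) (Fin m) ℝ} (hR : R.PosDef)
    (d : EuclideanSpace ℝ (Fin m)) : 0 ≤ (inner ℝ d (mv R d) : ℝ) := by
  have := hR.posSemidef.re_dotProduct_nonneg (WithLp.equiv 2 _ d)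
  simpa [mv, PiLp.inner_apply, dotProduct, Matrix.mulVec, mul_comm] using this

lemma mv_inv_cancel {m : ℕ} {R : Matrix (Fin m) (Fin m) ℝ} (hR : R.PosDef)
    (s : EuclideanSpace ℝ (Fin m)) : mv R (mv R⁻¹ s) = s := by
  simp [mv, Matrix.mulVec_mulVec,
    Matrix.mul_nonsing_inv R (isUnit_iff_ne_zero.mpr hR.det_pos.ne')]

lemma inner_mv_symm {m : ℕ} {R : Matrix (Fin m) (Fin m) ℝ} (hR : R.PosDef)
    (u v : EuclideanSpace ℝ (Fin m)) :
    (inner ℝ u (mv R v) : ℝ) = inner ℝ v (mv R u) := by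
  have hRt : Rᵀ = R := by
    ext i j
    have := congrFun (congrFun hR.isHermitian.eq i) j
    simpa using this
  rw [inner_mv_right, hRt, real_inner_comm]

/-- **Sign of the Hamiltonian under the HJI equation.**  If `V` is differentiable at `x` and
satisfies the HJI equation at `x`, then for all `u, w`,
`H_V(x, u_V(x), w) ≤ 0 ≤ H_V(x, u, w_V(x))`. -/
theorem ham_sign_under_hji {n m q p : ℕ}
    (f : EuclideanSpace ℝ (Fin n) → EuclideanSpace ℝ (Fin n))
    (g : EuclideanSpace ℝ (Fin n) → Matrix (Fin n) (Fin m) ℝ)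
    (k : EuclideanSpace ℝ (Fin n) → Matrix (Fin n) (Fin q) ℝ)
    (h : EuclideanSpace ℝ (Fin n) → EuclideanSpace ℝ (Fin p))
    (R : Matrix (Fin m) (Fin m) ℝ) (hR : R.PosDef)
    (γ : ℝ) (hγ : 0 < γ)
    (V : EuclideanSpace ℝ (Fin n) → ℝ)
    (x : EuclideanSpace ℝ (Fin n))
    (hV : DifferentiableAt ℝ V x)
    (hHJI : HJIAt f g k h R γ V x) :
    ∀ (u : EuclideanSpace ℝ (Fin m)) (w : EuclideanSpace ℝ (Fin q)),
      Ham f g k h R γ V x (uPol g R V x) w ≤ 0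
        ∧ 0 ≤ Ham f g k h R γ V x u (wPol k γ V x) := by
  intro u w
  unfold HJIAt at hHJI
  unfold Ham uPol wPol
  set a := gradient V x with ha
  set s : EuclideanSpace ℝ (Fin m) := mv (g x)ᵀ a with hs
  set t : EuclideanSpace ℝ (Fin q) := mv (k x)ᵀ a with ht
  set r : EuclideanSpace ℝ (Fin m) := mv R⁻¹ s with hr
  have hγ2 : (0:ℝ) < γ^2 := by positivity
  have hRr : mv R r = s := mv_inv_cancel hR s
  have hguE : ∀ v : EuclideanSpace ℝ (Fin m), (inner ℝ a (mv (g x) v) : ℝ) = inner ℝ s v :=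
    fun v => inner_mv_right (g x) a v
  have hkwE : ∀ v : EuclideanSpace ℝ (Fin q), (inner ℝ a (mv (k x) v) : ℝ) = inner ℝ t v :=
    fun v => inner_mv_right (k x) a v
  constructor
  · have e1 : (inner ℝ a (f x + mv (g x) ((-(1/2:ℝ)) • r) + mv (k x) w) : ℝ)
        = inner ℝ a (f x) + (-(1/2:ℝ)) * inner ℝ s r + inner ℝ t w := by
      rw [inner_add_right, inner_add_right, mv_smul, real_inner_smul_right, hguE, hkwE]
    have e2 : (inner ℝ ((-(1/2:ℝ)) • r) (mv R ((-(1/2:ℝ)) • r)) : ℝ)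
        = (1/4) * inner ℝ s r := by
      rw [mv_smul, real_inner_smul_left, real_inner_smul_right, hRr, real_inner_comm]
      ring
    rw [e1, e2]
    have key : (inner ℝ t w : ℝ) - γ^2 * ‖w‖^2
        = -(γ^2 * ‖w - (1/(2*γ^2)) • t‖^2) + (1/(4*γ^2)) * ‖t‖^2 := by
      rw [norm_sub_sq_real, real_inner_smul_right, norm_smul]
      rw [real_inner_comm w t]
      have h1 : ‖(1/(2*γ^2))‖ = 1/(2*γ^2) := by
        rw [Real.norm_eq_abs, abs_of_pos]; positivity
      rw [h1]
      field_simp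
      ring
    have hd : 0 ≤ γ^2 * ‖w - (1/(2*γ^2)) • t‖^2 := by positivity
    linarith [hHJI, key, hd]
  · have e1 : (inner ℝ a (f x + mv (g x) u + mv (k x) ((1/(2*γ^2)) • t)) : ℝ)
        = inner ℝ a (f x) + inner ℝ s u + (1/(2*γ^2)) * ‖t‖^2 := by
      rw [inner_add_right, inner_add_right, hguE, mv_smul, real_inner_smul_right, hkwE,
        real_inner_self_eq_norm_sq]
    have e2 : γ^2 * ‖(1/(2*γ^2)) • t‖^2 = (1/(4*γ^2)) * ‖t‖^2 := by
      rw [norm_smul, Real.norm_eq_abs, abs_of_pos (by positivity)]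
      rw [mul_pow]
      field_simp
      ring
    rw [e1, e2]
    have hmvadd : mv R (u + (1/2:ℝ) • r) = mv R u + (1/2:ℝ) • mv R r := by
      rw [mv_add, mv_smul]
    have hsym : (inner ℝ r (mv R u) : ℝ) = inner ℝ u s := by
      rw [← inner_mv_symm hR u r, hRr]
    have expand : (inner ℝ (u + (1/2:ℝ) • r) (mv R (u + (1/2:ℝ) • r)) : ℝ)
        = inner ℝ u (mv R u) + inner ℝ s u + (1/4) * inner ℝ s r := by
      rw [hmvadd, hRr]
      simp only [inner_add_left, inner_add_right, real_inner_smul_left, real_inner_smul_right]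
      rw [hsym, real_inner_comm u s, real_inner_comm r s]
      ring
    have pos := inner_mv_posdef hR (u + (1/2:ℝ) • r)
    rw [expand] at pos
    have h2t : (1/(2*γ^2)) * ‖t‖^2 - (1/(4*γ^2)) * ‖t‖^2 = (1/(4*γ^2)) * ‖t‖^2 := by
      field_simp; ring
    linarith [hHJI, pos, h2t]
end

section
/- Dissipation along closed-loop trajectories: let X ⊆ ℝⁿ, let V : ℝⁿ → ℝ be differentiable and satisfy the HJI equation at every point of X, let w : ℝ → ℝ^q, let I be an interval, and let x : ℝ → ℝⁿ be differentiable on I with x(t) ∈ X and x'(t) = f(x(t)) + g(x(t))·u_V(x(t)) + k(x(t))·w(t) for all t ∈ I. Then for every t ∈ I the function τ ↦ V(x(τ)) has derivative at t equal to γ²·‖w(t)‖² − ‖h(x(t))‖² − ⟨u_V(x(t)), R·u_V(x(t))⟩ − γ²·‖w(t) − w_V(x(t))‖², and hence this derivative is at most γ²·‖w(t)‖² − ‖h(x(t))‖² − ⟨u_V(x(t)), R·u_V(x(t))⟩. -/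
open Matrix

lemma inner_mv_swap {a b : ℕ} (M : Matrix (Fin a) (Fin b) ℝ) (u : EuclideanSpace ℝ (Fin a))
    (v : EuclideanSpace ℝ (Fin b)) :
    (inner ℝ u (mv M v) : ℝ) = inner ℝ (mv Mᵀ u) v := by
  simp only [mv, PiLp.inner_apply, RCLike.inner_apply, conj_trivial, Matrix.mulVec,
    dotProduct, Matrix.transpose_apply, Finset.mul_sum, Finset.sum_mul]
  rw [Finset.sum_comm]
  apply Finset.sum_congr rfl; intros; apply Finset.sum_congr rfl; intros; ring

lemma mv_mv {a b c : ℕ} (M : Matrix (Fin a) (Fin b) ℝ) (N : Matrix (Fin b) (Fin c) ℝ)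
    (v : EuclideanSpace ℝ (Fin c)) : mv M (mv N v) = mv (M * N) v := by
  simp [mv, Matrix.mulVec_mulVec]

lemma mv_one {a : ℕ} (v : EuclideanSpace ℝ (Fin a)) : mv 1 v = v := by
  simp [mv]

/-- **Dissipation along closed-loop trajectories.**  If `V` is differentiable and satisfies
the HJI equation at every point of `X`, and `x` solves the closed-loop dynamics
`x' = f(x) + g(x) u_V(x) + k(x) w(t)` in `X` on the interval `I`, then for every `t ∈ I`
the map `τ ↦ V(x τ)` has derivative
`γ²‖w t‖² - ‖h(x t)‖² - ⟨u_V(x t), R u_V(x t)⟩ - γ²‖w t - w_V(x t)‖²` at `t`, which is at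
most `γ²‖w t‖² - ‖h(x t)‖² - ⟨u_V(x t), R u_V(x t)⟩`. -/
theorem dissipation_along_trajectories {n m q p : ℕ}
    (f : EuclideanSpace ℝ (Fin n) → EuclideanSpace ℝ (Fin n))
    (g : EuclideanSpace ℝ (Fin n) → Matrix (Fin n) (Fin m) ℝ)
    (k : EuclideanSpace ℝ (Fin n) → Matrix (Fin n) (Fin q) ℝ)
    (h : EuclideanSpace ℝ (Fin n) → EuclideanSpace ℝ (Fin p))
    (R : Matrix (Fin m) (Fin m) ℝ) (hR : R.PosDef)
    (γ : ℝ) (hγ : 0 < γ)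
    (X : Set (EuclideanSpace ℝ (Fin n)))
    (V : EuclideanSpace ℝ (Fin n) → ℝ)
    (hV : ∀ y ∈ X, DifferentiableAt ℝ V y)
    (hHJI : ∀ y ∈ X, HJIAt f g k h R γ V y)
    (w : ℝ → EuclideanSpace ℝ (Fin q))
    (I : Set ℝ) (hI : I.OrdConnected)
    (x : ℝ → EuclideanSpace ℝ (Fin n))
    (hxX : ∀ t ∈ I, x t ∈ X)
    (hx : ∀ t ∈ I, HasDerivAt x
      (f (x t) + mv (g (x t)) (uPol g R V (x t)) + mv (k (x t)) (w t)) t) :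
    ∀ t ∈ I,
      HasDerivAt (fun τ => V (x τ))
          (γ^2 * ‖w t‖^2 - ‖h (x t)‖^2
            - (inner ℝ (uPol g R V (x t)) (mv R (uPol g R V (x t))) : ℝ)
            - γ^2 * ‖w t - wPol k γ V (x t)‖^2) t
        ∧ (γ^2 * ‖w t‖^2 - ‖h (x t)‖^2
            - (inner ℝ (uPol g R V (x t)) (mv R (uPol g R V (x t))) : ℝ)
            - γ^2 * ‖w t - wPol k γ V (x t)‖^2)
          ≤ γ^2 * ‖w t‖^2 - ‖h (x t)‖^2
            - (inner ℝ (uPol g R V (x t)) (mv R (uPol g R V (x t))) : ℝ) := by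
  intro t ht
  have hmem := hxX t ht
  have hγ2 : γ^2 ≠ 0 := pow_ne_zero _ hγ.ne'
  set a := gradient V (x t) with ha
  set z := mv (g (x t))ᵀ a with hz
  set y := mv (k (x t))ᵀ a with hy
  set A : ℝ := inner ℝ a (f (x t)) with hA
  set B : ℝ := inner ℝ z (mv R⁻¹ z) with hB
  set C : ℝ := ‖y‖^2 with hC
  set D : ℝ := (inner ℝ y (w t) : ℝ) with hD
  set H : ℝ := ‖h (x t)‖^2 with hH
  set W : ℝ := ‖w t‖^2 with hW
  have hRinv : R * R⁻¹ = 1 := Matrix.mul_nonsing_inv R (isUnit_iff_ne_zero.mpr hR.det_pos.ne')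
  -- the HJI equation
  have hhji : A + H - (1/4) * B + (1/(4*γ^2)) * C = 0 := hHJI (x t) hmem
  -- inner products
  have huPol : uPol g R V (x t) = (-(1/2:ℝ)) • mv R⁻¹ z := rfl
  have hwPol : wPol k γ V (x t) = (1/(2*γ^2) : ℝ) • y := rfl
  have e1 : (inner ℝ a (mv (g (x t)) (uPol g R V (x t))) : ℝ) = -(1/2) * B := by
    rw [inner_mv_swap, huPol, real_inner_smul_right, ← hz]
  have e2 : (inner ℝ a (mv (k (x t)) (w t)) : ℝ) = D := by
    rw [inner_mv_swap, ← hy]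
  have e3 : (inner ℝ (uPol g R V (x t)) (mv R (uPol g R V (x t))) : ℝ) = (1/4) * B := by
    have hRz : mv R (mv R⁻¹ z) = z := by rw [mv_mv, hRinv, mv_one]
    rw [huPol, mv_smul, real_inner_smul_left, real_inner_smul_right, hRz, real_inner_comm, ← hB]
    ring
  have e4 : ‖w t - wPol k γ V (x t)‖^2 = W - (1/γ^2) * D + (1/(4*γ^4)) * C := by
    rw [hwPol, norm_sub_sq_real, real_inner_smul_right, real_inner_comm, ← hD, norm_smul]
    rw [mul_pow, Real.norm_eq_abs, sq_abs, ← hC, ← hW]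
    field_simp
    ring
  -- the derivative
  have hd : HasDerivAt (fun τ => V (x τ))
      ((inner ℝ a (f (x t) + mv (g (x t)) (uPol g R V (x t)) + mv (k (x t)) (w t)) : ℝ)) t := by
    have hgrad := (hV (x t) hmem).hasGradientAt
    have := hgrad.hasFDerivAt.comp_hasDerivAt t (hx t ht)
    exact this
  have hval : (inner ℝ a (f (x t) + mv (g (x t)) (uPol g R V (x t)) + mv (k (x t)) (w t)) : ℝ)
      = γ^2 * W - H - (1/4) * B - γ^2 * ‖w t - wPol k γ V (x t)‖^2 := by
    rw [inner_add_right, inner_add_right, ← hA, e1, e2, e4]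
    have hAval : A = -H + (1/4) * B - (1/(4*γ^2)) * C := by linarith
    rw [hAval]
    field_simp
    ring
  constructor
  · rw [e3, ← hval]
    exact hd
  · have h0 : 0 ≤ γ^2 * ‖w t - wPol k γ V (x t)‖^2 := by positivity
    linarith
end

section
/- Lyapunov property of the HJI solution for the undisturbed closed loop (stability part of Lemma 1): let X ⊆ ℝⁿ, let V : ℝⁿ → ℝ be differentiable and satisfy the HJI equation at every point of X, let I be an interval, and let x : ℝ → ℝⁿ be differentiable on I with x(t) ∈ X and x'(t) = f(x(t)) + g(x(t))·u_V(x(t)) for all t ∈ I (i.e., the closed-loop dynamics with disturbance w ≡ 0). Then for every t ∈ I the derivative of τ ↦ V(x(τ)) at t equals −‖h(x(t))‖² − ⟨u_V(x(t)), R·u_V(x(t))⟩ − γ²·‖w_V(x(t))‖² ≤ 0; in particular t ↦ V(x(t)) is antitone (nonincreasing) on I. -/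
open Matrix

lemma inner_eq_dot {a : ℕ} (v w : EuclideanSpace ℝ (Fin a)) :
    (inner ℝ v w : ℝ) = v ⬝ᵥ w := by
  simp [PiLp.inner_apply, dotProduct, mul_comm]

lemma inner_mv {a b : ℕ} (M : Matrix (Fin a) (Fin b) ℝ)
    (v : EuclideanSpace ℝ (Fin a)) (w : EuclideanSpace ℝ (Fin b)) :
    (inner ℝ v (mv M w) : ℝ) = (inner ℝ (mv Mᵀ v) w : ℝ) := by
  rw [inner_eq_dot, inner_eq_dot]
  show v ⬝ᵥ M.mulVec w = Mᵀ.mulVec v ⬝ᵥ w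
  rw [Matrix.dotProduct_mulVec, Matrix.mulVec_transpose]

lemma mv_mv_inv {a : ℕ} (R : Matrix (Fin a) (Fin a) ℝ) (hR : R.PosDef)
    (v : EuclideanSpace ℝ (Fin a)) : mv R (mv R⁻¹ v) = v := by
  simp only [mv, Matrix.mulVec_mulVec,
    Matrix.mul_nonsing_inv R (isUnit_iff_ne_zero.mpr hR.det_pos.ne'), Matrix.one_mulVec, WithLp.ofLp_toLp, WithLp.toLp_ofLp]

lemma inner_mv_nonneg {a : ℕ} (R : Matrix (Fin a) (Fin a) ℝ) (hR : R.PosDef)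
    (v : EuclideanSpace ℝ (Fin a)) : 0 ≤ (inner ℝ v (mv R v) : ℝ) := by
  rw [inner_eq_dot]
  simpa [mv, WithLp.ofLp_toLp] using hR.posSemidef.dotProduct_mulVec_nonneg v.ofLp

lemma key {n m q p : ℕ}
    (f : EuclideanSpace ℝ (Fin n) → EuclideanSpace ℝ (Fin n))
    (g : EuclideanSpace ℝ (Fin n) → Matrix (Fin n) (Fin m) ℝ)
    (k : EuclideanSpace ℝ (Fin n) → Matrix (Fin n) (Fin q) ℝ)
    (h : EuclideanSpace ℝ (Fin n) → EuclideanSpace ℝ (Fin p))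
    (R : Matrix (Fin m) (Fin m) ℝ) (hR : R.PosDef)
    (γ : ℝ) (hγ : 0 < γ)
    (V : EuclideanSpace ℝ (Fin n) → ℝ)
    (y : EuclideanSpace ℝ (Fin n)) (hH : HJIAt f g k h R γ V y) :
    (inner ℝ (gradient V y) (f y + mv (g y) (uPol g R V y)) : ℝ)
      = -‖h y‖^2 - (inner ℝ (uPol g R V y) (mv R (uPol g R V y)) : ℝ)
        - γ^2 * ‖wPol k γ V y‖^2 := by
  set a := mv (g y)ᵀ (gradient V y) with ha
  have h1 : (inner ℝ (gradient V y) (mv (g y) (uPol g R V y)) : ℝ)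
      = -(1/2) * (inner ℝ a (mv R⁻¹ a) : ℝ) := by
    rw [inner_mv, ← ha]
    unfold uPol
    rw [← ha, real_inner_smul_right]
  have h2 : (inner ℝ (uPol g R V y) (mv R (uPol g R V y)) : ℝ)
      = (1/4) * (inner ℝ a (mv R⁻¹ a) : ℝ) := by
    unfold uPol
    rw [← ha, mv_smul, real_inner_smul_left, real_inner_smul_right, mv_mv_inv R hR,
      real_inner_comm]
    ring
  have h3 : γ^2 * ‖wPol k γ V y‖^2 = (1/(4*γ^2)) * ‖mv (k y)ᵀ (gradient V y)‖^2 := by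
    unfold wPol
    rw [norm_smul, mul_pow, Real.norm_eq_abs, sq_abs]
    have : γ ≠ 0 := hγ.ne'
    field_simp
    ring
  rw [inner_add_right, h1, h2, h3]
  unfold HJIAt at hH
  rw [← ha] at hH
  linarith

/-- **Lyapunov property of the HJI solution for the undisturbed closed loop (stability part
of Lemma 1).**  If `V` is differentiable and satisfies the HJI equation on `X`, and `x`
solves `x' = f(x) + g(x) u_V(x)` in `X` on the interval `I`, then `τ ↦ V(x τ)` has
derivative `-‖h(x t)‖² - ⟨u_V(x t), R u_V(x t)⟩ - γ²‖w_V(x t)‖² ≤ 0` at every `t ∈ I`, and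
`t ↦ V(x t)` is antitone on `I`. -/
theorem lyapunov_undisturbed {n m q p : ℕ}
    (f : EuclideanSpace ℝ (Fin n) → EuclideanSpace ℝ (Fin n))
    (g : EuclideanSpace ℝ (Fin n) → Matrix (Fin n) (Fin m) ℝ)
    (k : EuclideanSpace ℝ (Fin n) → Matrix (Fin n) (Fin q) ℝ)
    (h : EuclideanSpace ℝ (Fin n) → EuclideanSpace ℝ (Fin p))
    (R : Matrix (Fin m) (Fin m) ℝ) (hR : R.PosDef)
    (γ : ℝ) (hγ : 0 < γ)
    (X : Set (EuclideanSpace ℝ (Fin n)))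
    (V : EuclideanSpace ℝ (Fin n) → ℝ)
    (hV : ∀ y ∈ X, DifferentiableAt ℝ V y)
    (hHJI : ∀ y ∈ X, HJIAt f g k h R γ V y)
    (I : Set ℝ) (hI : I.OrdConnected)
    (x : ℝ → EuclideanSpace ℝ (Fin n))
    (hxX : ∀ t ∈ I, x t ∈ X)
    (hx : ∀ t ∈ I, HasDerivAt x (f (x t) + mv (g (x t)) (uPol g R V (x t))) t) :
    (∀ t ∈ I,
      HasDerivAt (fun τ => V (x τ))
          (-‖h (x t)‖^2 - (inner ℝ (uPol g R V (x t)) (mv R (uPol g R V (x t))) : ℝ)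
            - γ^2 * ‖wPol k γ V (x t)‖^2) t
        ∧ (-‖h (x t)‖^2 - (inner ℝ (uPol g R V (x t)) (mv R (uPol g R V (x t))) : ℝ)
            - γ^2 * ‖wPol k γ V (x t)‖^2) ≤ 0)
      ∧ AntitoneOn (fun t => V (x t)) I := by
  have main : ∀ t ∈ I,
      HasDerivAt (fun τ => V (x τ))
        (-‖h (x t)‖^2 - (inner ℝ (uPol g R V (x t)) (mv R (uPol g R V (x t))) : ℝ)
          - γ^2 * ‖wPol k γ V (x t)‖^2) t := by
    intro t ht
    have hgrad := (hV _ (hxX t ht)).hasGradientAt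
    have hd := hgrad.hasFDerivAt.comp_hasDerivAt t (hx t ht)
    have hval := key f g k h R hR γ hγ V (x t) (hHJI _ (hxX t ht))
    rw [← hval]
    exact hd
  have nonpos : ∀ t ∈ I,
      (-‖h (x t)‖^2 - (inner ℝ (uPol g R V (x t)) (mv R (uPol g R V (x t))) : ℝ)
        - γ^2 * ‖wPol k γ V (x t)‖^2) ≤ 0 := by
    intro t ht
    have h1 := inner_mv_nonneg R hR (uPol g R V (x t))
    have h2 : 0 ≤ γ^2 * ‖wPol k γ V (x t)‖^2 := mul_nonneg (sq_nonneg γ) (sq_nonneg _)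
    have h3 : (0:ℝ) ≤ ‖h (x t)‖^2 := sq_nonneg _
    linarith
  refine ⟨fun t ht => ⟨main t ht, nonpos t ht⟩, ?_⟩
  have hConv : Convex ℝ I := convex_iff_ordConnected.mpr hI
  apply antitoneOn_of_deriv_nonpos hConv
  · exact fun t ht => (main t ht).continuousAt.continuousWithinAt
  · exact fun t ht => (main t (interior_subset ht)).differentiableAt.differentiableWithinAt
  · intro t ht
    rw [(main t (interior_subset ht)).deriv]
    exact nonpos t (interior_subset ht)
end

section
/- (Linear independence claim in the proof of Theorem 2.) Let X ⊆ ℝⁿ, let L be a natural number, let φ₁, …, φ_L : ℝⁿ → ℝ be differentiable, and let F : ℝⁿ → ℝⁿ. Suppose that for every nonzero θ ∈ ℝᴸ there exist an interval I, a differentiable trajectory x : ℝ → ℝⁿ of F remaining in X on I, and times t₁, t₂ ∈ I such that Σ_{l=1}^{L} θ_l · (φ_l(x(t₂)) − φ_l(x(t₁))) ≠ 0. Then the L functions x ↦ ⟨∇φ_l(x), F(x)⟩ (l = 1, …, L) are linearly independent as real-valued functions on X; i.e., if Σ_{l=1}^{L} θ_l · ⟨∇φ_l(x), F(x)⟩ =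 0 for all x ∈ X then θ = 0. -/
/-- **Linear independence claim in the proof of Theorem 2.**  If for every nonzero `θ`
there is a trajectory of `F` in `X` along which `∑ l, θ l * (φ l (x t₂) - φ l (x t₁)) ≠ 0`,
then the functions `x ↦ ⟨∇φ l x, F x⟩` are linearly independent on `X`: any `θ` whose
corresponding combination vanishes identically on `X` must be zero. -/
theorem gradient_field_linear_independent {n L : ℕ}
    (X : Set (EuclideanSpace ℝ (Fin n)))
    (φ : Fin L → EuclideanSpace ℝ (Fin n) → ℝ)
    (hφ : ∀ l, Differentiable ℝ (φ l))
    (F : EuclideanSpace ℝ (Fin n) → EuclideanSpace ℝ (Fin n))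
    (hyp : ∀ θ : Fin L → ℝ, θ ≠ 0 →
      ∃ I : Set ℝ, I.OrdConnected ∧
        ∃ x : ℝ → EuclideanSpace ℝ (Fin n),
          (∀ t ∈ I, x t ∈ X) ∧
          (∀ t ∈ I, HasDerivAt x (F (x t)) t) ∧
          ∃ t₁ ∈ I, ∃ t₂ ∈ I,
            (∑ l, θ l * (φ l (x t₂) - φ l (x t₁))) ≠ 0) :
    ∀ θ : Fin L → ℝ,
      (∀ x ∈ X, ∑ l, θ l * (inner ℝ (gradient (φ l) x) (F x) : ℝ) = 0) → θ = 0 := by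
  intro θ hθ
  by_contra hne
  obtain ⟨I, hI, x, hxX, hxD, t₁, ht₁, t₂, ht₂, hsum⟩ := hyp θ hne
  set g : ℝ → ℝ := fun t => ∑ l, θ l * φ l (x t) with hg
  have hderiv : ∀ t ∈ I, HasDerivAt g 0 t := by
    intro t ht
    have h0 : HasDerivAt g (∑ l, θ l * (inner ℝ (gradient (φ l) (x t)) (F (x t)) : ℝ)) t := by
      apply HasDerivAt.fun_sum
      intro l _
      have h1 : HasFDerivAt (φ l) (InnerProductSpace.toDual ℝ _ (gradient (φ l) (x t))) (x t) :=
        (hasGradientAt_iff_hasFDerivAt.mp ((hφ l) (x t)).hasGradientAt)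
      have h2 := h1.comp_hasDerivAt t (hxD t ht)
      simpa [InnerProductSpace.toDual_apply_apply] using h2.const_mul (θ l)
    rwa [hθ (x t) (hxX t ht)] at h0
  have key : ∀ a ∈ I, ∀ b ∈ I, a ≤ b → g b = g a := by
    intro a ha b hb hab
    have hsub : Set.Icc a b ⊆ I := by
      have := hI.uIcc_subset ha hb
      rwa [Set.uIcc_of_le hab] at this
    exact constant_of_has_deriv_right_zero
      (fun y hy => ((hderiv y (hsub hy)).continuousAt).continuousWithinAt)
      (fun y hy => ((hderiv y (hsub (Set.mem_Icc.mpr ⟨hy.1, hy.2.le⟩))).hasDerivWithinAt))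
      b (Set.mem_Icc.mpr ⟨hab, le_refl b⟩)
  have hconst : g t₁ = g t₂ := by
    rcases le_total t₁ t₂ with h | h
    · exact (key t₁ ht₁ t₂ ht₂ h).symm
    · exact key t₂ ht₂ t₁ ht₁ h
  apply hsum
  have : g t₂ - g t₁ = 0 := by rw [hconst]; ring
  rw [← this]
  simp [hg, mul_sub, Finset.sum_sub_distrib]
end

section
/- (Reduction of the iterative linear PDE (LFE) to the Lyapunov matrix equation, equation (5.5).) Let P_i and P⁺ be symmetric n×n real matrices. Define the policies u_i(x) = −R⁻¹·B₂ᵀ·P_i·x and w_i(x) = γ⁻²·B₁ᵀ·P_i·x, the closed-loop matrix Ā_i = A + γ⁻²·B₁·B₁ᵀ·P_i − B₂·R⁻¹·B₂ᵀ·P_i, and Q̄_i = Q − γ⁻²·P_i·B₁·B₁ᵀ·P_i + P_i·B₂·R⁻¹·B₂ᵀ·P_i. Then the quadratic function V(x) = ⟨x, P⁺·x⟩ satisfies the linear PDE ⟨2·P⁺·x, A·x + B₂·u_i(x) + B₁·w_i(x)⟩ + ‖C·x‖² + ⟨u_i(x), R·u_i(x)⟩ − γ²·‖w_i(x)‖²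 = 0 for all x ∈ ℝⁿ if and only if P⁺ satisfies the Lyapunov equation Ā_iᵀ·P⁺ + P⁺·Ā_i + Q̄_i = 0. -/
open Matrix

lemma dp2 {a b c : ℕ} (M : Matrix (Fin a) (Fin b) ℝ) (N : Matrix (Fin a) (Fin c) ℝ)
    (x : Fin b → ℝ) (y : Fin c → ℝ) :
    (M *ᵥ x) ⬝ᵥ (N *ᵥ y) = x ⬝ᵥ ((Mᵀ * N) *ᵥ y) := by
  rw [dotProduct_comm, Matrix.dotProduct_mulVec, dotProduct_comm,
    ← Matrix.mulVec_transpose, Matrix.mulVec_mulVec]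

lemma qt {k : ℕ} (M : Matrix (Fin k) (Fin k) ℝ) (x : Fin k → ℝ) :
    x ⬝ᵥ (Mᵀ *ᵥ x) = x ⬝ᵥ (M *ᵥ x) := by
  rw [Matrix.dotProduct_mulVec, Matrix.vecMul_transpose, dotProduct_comm]

lemma quad_zero {k : ℕ} (S : Matrix (Fin k) (Fin k) ℝ) (hS : Sᵀ = S)
    (h : ∀ x : Fin k → ℝ, x ⬝ᵥ (S *ᵥ x) = 0) : S = 0 := by
  ext i j
  have hii := h (Pi.single i 1)
  have hjj := h (Pi.single j 1)
  have hij := h (Pi.single i 1 + Pi.single j 1)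
  have hsym : S j i = S i j := congrFun (congrFun hS i) j
  simp [Matrix.mulVec_add, dotProduct_add, add_dotProduct,
    Matrix.mulVec_single, single_dotProduct] at hii hjj hij
  simp only [Matrix.zero_apply]
  linarith


/-- **Reduction of the iterative linear PDE (LFE) to the Lyapunov matrix equation
(equation (5.5)).**  With the policies `uᵢ(x) = -R⁻¹B₂ᵀPᵢx`, `wᵢ(x) = γ⁻²B₁ᵀPᵢx`, the
closed-loop matrix `Āᵢ = A + γ⁻²B₁B₁ᵀPᵢ - B₂R⁻¹B₂ᵀPᵢ` and
`Q̄ᵢ = Q - γ⁻²PᵢB₁B₁ᵀPᵢ + PᵢB₂R⁻¹B₂ᵀPᵢ` (`Q = CᵀC`), the quadratic function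
`V(x) = ⟨x, P⁺x⟩` satisfies the linear PDE iff `P⁺` solves the Lyapunov equation
`ĀᵢᵀP⁺ + P⁺Āᵢ + Q̄ᵢ = 0`. -/
theorem lfe_iff_lyapunov {n m q p : ℕ}
    (A : Matrix (Fin n) (Fin n) ℝ)
    (B₁ : Matrix (Fin n) (Fin q) ℝ)
    (B₂ : Matrix (Fin n) (Fin m) ℝ)
    (C : Matrix (Fin p) (Fin n) ℝ)
    (R : Matrix (Fin m) (Fin m) ℝ) (hR : R.PosDef)
    (γ : ℝ) (hγ : 0 < γ)
    (Pi Pplus : Matrix (Fin n) (Fin n) ℝ) (hPi : Pi.IsSymm) (hPplus : Pplus.IsSymm) :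
    (∀ x : EuclideanSpace ℝ (Fin n),
        (inner ℝ ((2:ℝ) • mv Pplus x)
            (mv A x + mv B₂ (-(mv R⁻¹ (mv B₂ᵀ (mv Pi x))))
              + mv B₁ ((γ^2)⁻¹ • mv B₁ᵀ (mv Pi x))) : ℝ)
          + ‖mv C x‖^2
          + (inner ℝ (-(mv R⁻¹ (mv B₂ᵀ (mv Pi x)))) (mv R (-(mv R⁻¹ (mv B₂ᵀ (mv Pi x))))) : ℝ)
          - γ^2 * ‖(γ^2)⁻¹ • mv B₁ᵀ (mv Pi x)‖^2 = 0)
      ↔ (A + (γ^2)⁻¹ • (B₁ * B₁ᵀ * Pi) - B₂ * R⁻¹ * B₂ᵀ * Pi)ᵀ * Pplus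
          + Pplus * (A + (γ^2)⁻¹ • (B₁ * B₁ᵀ * Pi) - B₂ * R⁻¹ * B₂ᵀ * Pi)
          + (Cᵀ * C - (γ^2)⁻¹ • (Pi * B₁ * B₁ᵀ * Pi) + Pi * B₂ * R⁻¹ * B₂ᵀ * Pi) = 0 := by
  have hdet : IsUnit R.det := isUnit_iff_ne_zero.mpr (ne_of_gt hR.det_pos)
  have hRR : R * R⁻¹ = 1 := Matrix.mul_nonsing_inv R hdet
  have hRs : Rᵀ = R := hR.isHermitian.eq
  have hRinvs : (R⁻¹)ᵀ = R⁻¹ := by rw [Matrix.transpose_nonsing_inv, hRs]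
  have hγ2 : (γ:ℝ)^2 ≠ 0 := pow_ne_zero _ (ne_of_gt hγ)
  set Abar : Matrix (Fin n) (Fin n) ℝ :=
    A + (γ^2)⁻¹ • (B₁ * B₁ᵀ * Pi) - B₂ * R⁻¹ * B₂ᵀ * Pi with hAbar
  set Qbar : Matrix (Fin n) (Fin n) ℝ :=
    Cᵀ * C - (γ^2)⁻¹ • (Pi * B₁ * B₁ᵀ * Pi) + Pi * B₂ * R⁻¹ * B₂ᵀ * Pi with hQbar
  set S : Matrix (Fin n) (Fin n) ℝ := Abarᵀ * Pplus + Pplus * Abar + Qbar with hSdef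
  set T : Matrix (Fin n) (Fin n) ℝ := (2:ℝ) • (Pplus * Abar) + Qbar with hTdef
  -- matrix identity:  (1/2) • (T + Tᵀ) = S
  have hTS : (2:ℝ)⁻¹ • (T + Tᵀ) = S := by
    have hQbarT : Qbarᵀ = Qbar := by
      simp [hQbar, Matrix.transpose_add, Matrix.transpose_sub, Matrix.transpose_smul,
        Matrix.transpose_mul, Matrix.transpose_transpose, hPi.eq, hRinvs, Matrix.mul_assoc]
    have : Tᵀ = (2:ℝ) • (Abarᵀ * Pplus) + Qbar := by
      simp [hTdef, Matrix.transpose_add, Matrix.transpose_smul, Matrix.transpose_mul,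
        hPplus.eq, hQbarT]
    rw [hTdef, this, hSdef]
    module
  have hSsymm : Sᵀ = S := by
    rw [← hTS]
    simp [Matrix.transpose_add, Matrix.transpose_smul, Matrix.transpose_transpose]
    abel_nf
  -- the key pointwise identity
  have key : ∀ x : EuclideanSpace ℝ (Fin n),
      (inner ℝ ((2:ℝ) • mv Pplus x)
            (mv A x + mv B₂ (-(mv R⁻¹ (mv B₂ᵀ (mv Pi x))))
              + mv B₁ ((γ^2)⁻¹ • mv B₁ᵀ (mv Pi x))) : ℝ)
          + ‖mv C x‖^2
          + (inner ℝ (-(mv R⁻¹ (mv B₂ᵀ (mv Pi x)))) (mv R (-(mv R⁻¹ (mv B₂ᵀ (mv Pi x))))) : ℝ)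
          - γ^2 * ‖(γ^2)⁻¹ • mv B₁ᵀ (mv Pi x)‖^2
        = (x : Fin n → ℝ) ⬝ᵥ (S *ᵥ (x : Fin n → ℝ)) := by
    intro x
    have hin : ∀ {k : ℕ} (u v : EuclideanSpace ℝ (Fin k)), (inner ℝ u v : ℝ) = (u : Fin k → ℝ) ⬝ᵥ (v : Fin k → ℝ) := fun u v => by
      simp only [PiLp.inner_apply, RCLike.inner_apply, conj_trivial, dotProduct, mul_comm]
    have hnorm : ∀ {k : ℕ} (v : EuclideanSpace ℝ (Fin k)), ‖v‖^2 = (v : Fin k → ℝ) ⬝ᵥ (v : Fin k → ℝ) := by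
      intro k v; rw [← real_inner_self_eq_norm_sq]; rfl
    rw [hin, hin, hnorm, hnorm]
    show ((2:ℝ) • (Pplus *ᵥ x)) ⬝ᵥ (A *ᵥ x + B₂ *ᵥ (-(R⁻¹ *ᵥ (B₂ᵀ *ᵥ (Pi *ᵥ x))))
            + B₁ *ᵥ ((γ^2)⁻¹ • (B₁ᵀ *ᵥ (Pi *ᵥ x))))
        + (C *ᵥ x) ⬝ᵥ (C *ᵥ x)
        + (-(R⁻¹ *ᵥ (B₂ᵀ *ᵥ (Pi *ᵥ x)))) ⬝ᵥ (R *ᵥ (-(R⁻¹ *ᵥ (B₂ᵀ *ᵥ (Pi *ᵥ x)))))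
        - γ^2 * (((γ^2)⁻¹ • (B₁ᵀ *ᵥ (Pi *ᵥ x))) ⬝ᵥ ((γ^2)⁻¹ • (B₁ᵀ *ᵥ (Pi *ᵥ x))))
        = x ⬝ᵥ (S *ᵥ x)
    have hAx : A *ᵥ x + B₂ *ᵥ (-(R⁻¹ *ᵥ (B₂ᵀ *ᵥ (Pi *ᵥ x))))
            + B₁ *ᵥ ((γ^2)⁻¹ • (B₁ᵀ *ᵥ (Pi *ᵥ x))) = Abar *ᵥ x := by
      simp [hAbar, Matrix.add_mulVec, Matrix.sub_mulVec, Matrix.smul_mulVec,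
        Matrix.mulVec_neg, Matrix.mulVec_smul, Matrix.mulVec_mulVec, Matrix.mul_assoc]
      abel
    rw [hAx]
    have hRterm : R *ᵥ (-(R⁻¹ *ᵥ (B₂ᵀ *ᵥ (Pi *ᵥ x)))) = -((B₂ᵀ * Pi) *ᵥ x) := by
      rw [Matrix.mulVec_neg, Matrix.mulVec_mulVec, Matrix.mulVec_mulVec,
        hRR, Matrix.one_mul, Matrix.mulVec_mulVec]
    rw [hRterm]
    have e1 : ((2:ℝ) • (Pplus *ᵥ x)) ⬝ᵥ (Abar *ᵥ x) = (2:ℝ) * (x ⬝ᵥ ((Pplusᵀ * Abar) *ᵥ x)) := by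
      rw [smul_dotProduct, dp2]; rfl
    have e2 : (C *ᵥ x) ⬝ᵥ (C *ᵥ x) = x ⬝ᵥ ((Cᵀ * C) *ᵥ x) := dp2 C C x x
    have e3 : (-(R⁻¹ *ᵥ (B₂ᵀ *ᵥ (Pi *ᵥ x)))) ⬝ᵥ (-((B₂ᵀ * Pi) *ᵥ x))
        = x ⬝ᵥ ((Piᵀ * B₂ * (R⁻¹)ᵀ * (B₂ᵀ * Pi)) *ᵥ x) := by
      rw [neg_dotProduct, dotProduct_neg, neg_neg,
        Matrix.mulVec_mulVec, Matrix.mulVec_mulVec, dp2]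
      congr 2
      simp [Matrix.transpose_mul, Matrix.transpose_transpose, Matrix.mul_assoc]
    have e4 : γ^2 * (((γ^2)⁻¹ • (B₁ᵀ *ᵥ (Pi *ᵥ x))) ⬝ᵥ ((γ^2)⁻¹ • (B₁ᵀ *ᵥ (Pi *ᵥ x))))
        = (γ^2)⁻¹ * (x ⬝ᵥ ((Piᵀ * B₁ * (B₁ᵀ * Pi)) *ᵥ x)) := by
      rw [Matrix.mulVec_mulVec, smul_dotProduct,
        dotProduct_smul, dp2, Matrix.transpose_mul, Matrix.transpose_transpose,
        smul_eq_mul, smul_eq_mul]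
      field_simp
    rw [e1, e2, e3, e4]
    -- now express RHS
    have hSx : x ⬝ᵥ (S *ᵥ x) = x ⬝ᵥ (T *ᵥ x) := by
      rw [← hTS]
      rw [Matrix.smul_mulVec, Matrix.add_mulVec, dotProduct_smul,
        dotProduct_add, qt]
      rw [smul_eq_mul]
      ring
    rw [hSx, hTdef, hQbar]
    simp only [Matrix.add_mulVec, Matrix.sub_mulVec, Matrix.smul_mulVec,
      dotProduct_add, dotProduct_sub, dotProduct_smul, smul_eq_mul]
    have h2 : x ⬝ᵥ ((Pplus * Abar) *ᵥ x) = x ⬝ᵥ ((Pplusᵀ * Abar) *ᵥ x) := by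
      rw [hPplus.eq]
    have h3 : x ⬝ᵥ ((Pi * B₂ * R⁻¹ * B₂ᵀ * Pi) *ᵥ x)
        = x ⬝ᵥ ((Piᵀ * B₂ * (R⁻¹)ᵀ * (B₂ᵀ * Pi)) *ᵥ x) := by
      rw [hPi.eq, hRinvs, Matrix.mul_assoc (Pi * B₂ * R⁻¹)]
    have h4 : x ⬝ᵥ ((Pi * B₁ * B₁ᵀ * Pi) *ᵥ x)
        = x ⬝ᵥ ((Piᵀ * B₁ * (B₁ᵀ * Pi)) *ᵥ x) := by
      rw [hPi.eq, Matrix.mul_assoc (Pi * B₁)]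
    rw [h2, h3, h4]
    ring
  constructor
  · intro h
    apply quad_zero S hSsymm
    intro x
    exact (key (WithLp.toLp 2 x)).symm.trans (h _)
  · intro h x
    rw [key x, h]
    simp
end

section
/- (Off-policy integral identity for the linear system, equation (5.7).) Let P_i and P⁺ be symmetric n×n real matrices, define the closed-loop matrix Ā_i = A + γ⁻²·B₁·B₁ᵀ·P_i − B₂·R⁻¹·B₂ᵀ·P_i and Q̄_i = Q − γ⁻²·P_i·B₁·B₁ᵀ·P_i + P_i·B₂·R⁻¹·B₂ᵀ·P_i, and suppose P⁺ satisfies the Lyapunov equation Ā_iᵀ·P⁺ + P⁺·Ā_i + Q̄_i = 0. Let u : ℝ → ℝᵐ and w : ℝ → ℝ^q be continuous, let t ∈ ℝ and Δt > 0, and let x : ℝ → ℝⁿ be differentiable on [t, t+Δt] with x'(τ) = A·x(τ) + B₂·u(τ) + B₁·w(τ) for all τ ∈ [t, t+Δt]. Then 2·∫ₜ^{t+Δt} ⟨P⁺·x(τ), B₂·(u(τ) + R⁻¹·B₂ᵀ·P_i·x(τ))⟩ dτ + 2·∫ₜ^{t+Δt} ⟨P⁺·x(τ), B₁·(w(τ)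 − γ⁻²·B₁ᵀ·P_i·x(τ))⟩ dτ + ⟨x(t), P⁺·x(t)⟩ − ⟨x(t+Δt), P⁺·x(t+Δt)⟩ = ∫ₜ^{t+Δt} ⟨x(τ), Q̄_i·x(τ)⟩ dτ. -/
open Matrix MeasureTheory

private lemma inner_eq_dot' {k : ℕ} (a b : EuclideanSpace ℝ (Fin k)) :
    (inner ℝ a b : ℝ) = dotProduct (a : Fin k → ℝ) (b : Fin k → ℝ) := by
  simp [PiLp.inner_apply, dotProduct, RCLike.inner_apply, mul_comm]

private lemma mv_hasDeriv' {a b : ℕ} (M : Matrix (Fin a) (Fin b) ℝ)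
    {x : ℝ → EuclideanSpace ℝ (Fin b)} {x' : EuclideanSpace ℝ (Fin b)} {τ : ℝ}
    (h : HasDerivAt x x' τ) : HasDerivAt (fun s => mv M (x s)) (mv M x') τ := by
  have := ((LinearMap.toContinuousLinearMap (Matrix.toEuclideanLin M)).hasFDerivAt
    (x := x τ)).comp_hasDerivAt τ h
  have e1 : (fun s => mv M (x s)) = (LinearMap.toContinuousLinearMap (Matrix.toEuclideanLin M)) ∘ x := by
    funext s; simp [mv, Function.comp, Matrix.toEuclideanLin_apply]
  have e2 : mv M x' = (LinearMap.toContinuousLinearMap (Matrix.toEuclideanLin M)) x' := by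
    simp [mv, Matrix.toEuclideanLin_apply]
  rw [e1, e2]; exact this

private lemma mv_continuous' {a b : ℕ} (M : Matrix (Fin a) (Fin b) ℝ) :
    Continuous (mv M) := by
  have := (LinearMap.toContinuousLinearMap (Matrix.toEuclideanLin M)).continuous
  convert this using 1
  funext v; simp [mv, Matrix.toEuclideanLin_apply]

private lemma pointwise' {n m q : ℕ}
    (A : Matrix (Fin n) (Fin n) ℝ) (B₁ : Matrix (Fin n) (Fin q) ℝ)
    (B₂ : Matrix (Fin n) (Fin m) ℝ) (R : Matrix (Fin m) (Fin m) ℝ)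
    (γ : ℝ) (Pi Pplus Qbar : Matrix (Fin n) (Fin n) ℝ)
    (hPi : Pi.IsSymm) (hPplus : Pplus.IsSymm) (hRs : R.IsSymm)
    (hQ : Qbar = -((A + (γ^2)⁻¹ • (B₁ * B₁ᵀ * Pi) - B₂ * R⁻¹ * B₂ᵀ * Pi)ᵀ * Pplus
        + Pplus * (A + (γ^2)⁻¹ • (B₁ * B₁ᵀ * Pi) - B₂ * R⁻¹ * B₂ᵀ * Pi)))
    (v : Fin n → ℝ) (u' : Fin m → ℝ) (w' : Fin q → ℝ) :
    2 * ((Pplus *ᵥ v) ⬝ᵥ (B₂ *ᵥ (u' + R⁻¹ *ᵥ (B₂ᵀ *ᵥ (Pi *ᵥ v)))))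
      + 2 * ((Pplus *ᵥ v) ⬝ᵥ (B₁ *ᵥ (w' - (γ^2)⁻¹ • (B₁ᵀ *ᵥ (Pi *ᵥ v)))))
      - ((v ⬝ᵥ (Pplus *ᵥ (A *ᵥ v + B₂ *ᵥ u' + B₁ *ᵥ w')))
         + ((A *ᵥ v + B₂ *ᵥ u' + B₁ *ᵥ w') ⬝ᵥ (Pplus *ᵥ v)))
      = v ⬝ᵥ (Qbar *ᵥ v) := by
  have htrans : ∀ {a b : ℕ} (M : Matrix (Fin a) (Fin b) ℝ) (x : Fin b → ℝ) (y : Fin a → ℝ),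
      (M *ᵥ x) ⬝ᵥ y = x ⬝ᵥ (Mᵀ *ᵥ y) := by
    intro a b M x y
    rw [dotProduct_comm, dotProduct_mulVec, dotProduct_comm, ← mulVec_transpose]
  have hu_comm : ∀ z : Fin m → ℝ, u' ⬝ᵥ z = z ⬝ᵥ u' := fun z => dotProduct_comm _ _
  have hw_comm : ∀ z : Fin q → ℝ, w' ⬝ᵥ z = z ⬝ᵥ w' := fun z => dotProduct_comm _ _
  have hRinv : (R⁻¹)ᵀ = R⁻¹ := by rw [Matrix.transpose_nonsing_inv, hRs.eq]
  subst hQ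
  simp only [Matrix.neg_mulVec, dotProduct_neg, Matrix.add_mulVec, Matrix.sub_mulVec,
    Matrix.mulVec_add, Matrix.mulVec_sub, Matrix.mulVec_smul, smul_mulVec,
    Matrix.mulVec_mulVec, Matrix.transpose_add, Matrix.transpose_sub,
    Matrix.transpose_smul, Matrix.transpose_mul, Matrix.transpose_transpose,
    dotProduct_add, dotProduct_sub, dotProduct_smul, add_dotProduct, sub_dotProduct,
    smul_dotProduct, htrans, hu_comm, hw_comm, hPi.eq, hPplus.eq, hRinv,
    Matrix.mul_assoc, smul_eq_mul, Matrix.add_mul, Matrix.sub_mul, Matrix.mul_add,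
    Matrix.mul_sub, Matrix.smul_mul, Matrix.mul_smul]
  ring_nf
  have flip : ∀ M : Matrix (Fin n) (Fin n) ℝ, v ⬝ᵥ M *ᵥ v = v ⬝ᵥ Mᵀ *ᵥ v := by
    intro M; rw [← htrans, dotProduct_comm]
  have e1 : v ⬝ᵥ (Pi * (B₁ * (B₁ᵀ * Pplus))) *ᵥ v = v ⬝ᵥ (Pplus * (B₁ * (B₁ᵀ * Pi))) *ᵥ v := by
    rw [flip]; simp [Matrix.transpose_mul, hPi.eq, hPplus.eq, Matrix.mul_assoc]
  have e2 : v ⬝ᵥ (Pi * (B₂ * (R⁻¹ * (B₂ᵀ * Pplus)))) *ᵥ v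
      = v ⬝ᵥ (Pplus * (B₂ * (R⁻¹ * (B₂ᵀ * Pi)))) *ᵥ v := by
    rw [flip]; simp [Matrix.transpose_mul, hPi.eq, hPplus.eq, hRinv, Matrix.mul_assoc]
  linear_combination γ⁻¹ ^ 2 * e1 - e2

/-- **Off-policy integral identity for the linear system (equation (5.7)).**  If `P⁺`
solves the Lyapunov equation `ĀᵢᵀP⁺ + P⁺Āᵢ + Q̄ᵢ = 0`, then along any trajectory of
`x' = A x + B₂ u + B₁ w` on `[t, t+Δt]`,
`2∫ ⟨P⁺x, B₂(u + R⁻¹B₂ᵀPᵢx)⟩ + 2∫ ⟨P⁺x, B₁(w - γ⁻²B₁ᵀPᵢx)⟩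
  + ⟨x(t), P⁺x(t)⟩ - ⟨x(t+Δt), P⁺x(t+Δt)⟩ = ∫ ⟨x, Q̄ᵢx⟩`. -/
theorem linear_off_policy_identity {n m q p : ℕ}
    (A : Matrix (Fin n) (Fin n) ℝ)
    (B₁ : Matrix (Fin n) (Fin q) ℝ)
    (B₂ : Matrix (Fin n) (Fin m) ℝ)
    (C : Matrix (Fin p) (Fin n) ℝ)
    (R : Matrix (Fin m) (Fin m) ℝ) (hR : R.PosDef)
    (γ : ℝ) (hγ : 0 < γ)
    (Pi Pplus : Matrix (Fin n) (Fin n) ℝ) (hPi : Pi.IsSymm) (hPplus : Pplus.IsSymm)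
    (hLyap : (A + (γ^2)⁻¹ • (B₁ * B₁ᵀ * Pi) - B₂ * R⁻¹ * B₂ᵀ * Pi)ᵀ * Pplus
        + Pplus * (A + (γ^2)⁻¹ • (B₁ * B₁ᵀ * Pi) - B₂ * R⁻¹ * B₂ᵀ * Pi)
        + (Cᵀ * C - (γ^2)⁻¹ • (Pi * B₁ * B₁ᵀ * Pi) + Pi * B₂ * R⁻¹ * B₂ᵀ * Pi) = 0)
    (u : ℝ → EuclideanSpace ℝ (Fin m)) (hu : Continuous u)
    (w : ℝ → EuclideanSpace ℝ (Fin q)) (hw : Continuous w)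
    (t Δt : ℝ) (hΔt : 0 < Δt)
    (x : ℝ → EuclideanSpace ℝ (Fin n))
    (hx : ∀ τ ∈ Set.Icc t (t + Δt),
      HasDerivAt x (mv A (x τ) + mv B₂ (u τ) + mv B₁ (w τ)) τ) :
    2 * (∫ τ in t..(t + Δt),
          (inner ℝ (mv Pplus (x τ)) (mv B₂ (u τ + mv R⁻¹ (mv B₂ᵀ (mv Pi (x τ))))) : ℝ))
      + 2 * (∫ τ in t..(t + Δt),
          (inner ℝ (mv Pplus (x τ)) (mv B₁ (w τ - (γ^2)⁻¹ • mv B₁ᵀ (mv Pi (x τ)))) : ℝ))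
      + (inner ℝ (x t) (mv Pplus (x t)) : ℝ)
      - (inner ℝ (x (t + Δt)) (mv Pplus (x (t + Δt))) : ℝ)
      = ∫ τ in t..(t + Δt),
          (inner ℝ (x τ)
            (mv (Cᵀ * C - (γ^2)⁻¹ • (Pi * B₁ * B₁ᵀ * Pi) + Pi * B₂ * R⁻¹ * B₂ᵀ * Pi)
              (x τ)) : ℝ) := by
  have hle : t ≤ t + Δt := le_of_lt (lt_add_of_pos_right t hΔt)
  have huIcc : Set.uIcc t (t + Δt) = Set.Icc t (t + Δt) := Set.uIcc_of_le hle
  set Qbar : Matrix (Fin n) (Fin n) ℝ :=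
    Cᵀ * C - (γ^2)⁻¹ • (Pi * B₁ * B₁ᵀ * Pi) + Pi * B₂ * R⁻¹ * B₂ᵀ * Pi with hQbar
  have hRs : R.IsSymm := by
    have h := hR.1.eq
    rwa [Matrix.conjTranspose_eq_transpose_of_trivial] at h
  have hQ : Qbar = -((A + (γ^2)⁻¹ • (B₁ * B₁ᵀ * Pi) - B₂ * R⁻¹ * B₂ᵀ * Pi)ᵀ * Pplus
      + Pplus * (A + (γ^2)⁻¹ • (B₁ * B₁ᵀ * Pi) - B₂ * R⁻¹ * B₂ᵀ * Pi)) :=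
    eq_neg_of_add_eq_zero_right hLyap
  -- trajectory data
  set X' : ℝ → EuclideanSpace ℝ (Fin n) :=
    fun τ => mv A (x τ) + mv B₂ (u τ) + mv B₁ (w τ) with hX'
  have hxc : ContinuousOn x (Set.Icc t (t + Δt)) :=
    fun τ hτ => (hx τ hτ).continuousAt.continuousWithinAt
  have hX'c : ContinuousOn X' (Set.Icc t (t + Δt)) := by
    apply ContinuousOn.add
    apply ContinuousOn.add
    · exact (mv_continuous' A).comp_continuousOn hxc
    · exact ((mv_continuous' B₂).comp hu).continuousOn
    · exact ((mv_continuous' B₁).comp hw).continuousOn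
  -- integrands
  set fa : ℝ → ℝ := fun τ =>
    (inner ℝ (mv Pplus (x τ)) (mv B₂ (u τ + mv R⁻¹ (mv B₂ᵀ (mv Pi (x τ))))) : ℝ) with hfa
  set fb : ℝ → ℝ := fun τ =>
    (inner ℝ (mv Pplus (x τ)) (mv B₁ (w τ - (γ^2)⁻¹ • mv B₁ᵀ (mv Pi (x τ)))) : ℝ) with hfb
  set fc : ℝ → ℝ := fun τ => (inner ℝ (x τ) (mv Qbar (x τ)) : ℝ) with hfc
  set d : ℝ → ℝ := fun τ =>
    (inner ℝ (x τ) (mv Pplus (X' τ)) : ℝ) + (inner ℝ (X' τ) (mv Pplus (x τ)) : ℝ) with hd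
  have hfac : ContinuousOn fa (Set.Icc t (t + Δt)) := by
    apply ContinuousOn.inner ((mv_continuous' Pplus).comp_continuousOn hxc)
    exact (mv_continuous' B₂).comp_continuousOn
      (hu.continuousOn.add ((mv_continuous' R⁻¹).comp_continuousOn
        ((mv_continuous' B₂ᵀ).comp_continuousOn ((mv_continuous' Pi).comp_continuousOn hxc))))
  have hfbc : ContinuousOn fb (Set.Icc t (t + Δt)) := by
    apply ContinuousOn.inner ((mv_continuous' Pplus).comp_continuousOn hxc)
    exact (mv_continuous' B₁).comp_continuousOn
      (hw.continuousOn.sub (((mv_continuous' B₁ᵀ).comp_continuousOn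
        ((mv_continuous' Pi).comp_continuousOn hxc)).const_smul ((γ^2)⁻¹)))
  have hfcc : ContinuousOn fc (Set.Icc t (t + Δt)) :=
    ContinuousOn.inner hxc ((mv_continuous' Qbar).comp_continuousOn hxc)
  have hdc : ContinuousOn d (Set.Icc t (t + Δt)) :=
    (ContinuousOn.inner hxc ((mv_continuous' Pplus).comp_continuousOn hX'c)).add
      (ContinuousOn.inner hX'c ((mv_continuous' Pplus).comp_continuousOn hxc))
  have hfaI : IntervalIntegrable fa volume t (t + Δt) :=
    (huIcc ▸ hfac).intervalIntegrable
  have hfbI : IntervalIntegrable fb volume t (t + Δt) :=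
    (huIcc ▸ hfbc).intervalIntegrable
  have hdI : IntervalIntegrable d volume t (t + Δt) :=
    (huIcc ▸ hdc).intervalIntegrable
  -- FTC
  have hderiv : ∀ τ ∈ Set.uIcc t (t + Δt),
      HasDerivAt (fun s => (inner ℝ (x s) (mv Pplus (x s)) : ℝ)) (d τ) τ := by
    rw [huIcc]
    intro τ hτ
    exact (hx τ hτ).inner ℝ (mv_hasDeriv' Pplus (hx τ hτ))
  have hftc : ∫ τ in t..(t + Δt), d τ
      = (inner ℝ (x (t + Δt)) (mv Pplus (x (t + Δt))) : ℝ)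
        - (inner ℝ (x t) (mv Pplus (x t)) : ℝ) :=
    intervalIntegral.integral_eq_sub_of_hasDerivAt hderiv hdI
  -- pointwise identity
  have hpt : Set.EqOn (fun τ => 2 * fa τ + 2 * fb τ - d τ) fc (Set.uIcc t (t + Δt)) := by
    rw [huIcc]
    intro τ hτ
    have := pointwise' A B₁ B₂ R γ Pi Pplus Qbar hPi hPplus hRs hQ (x τ) (u τ) (w τ)
    simp only [hfa, hfb, hfc, hd, hX', mv, inner_eq_dot']
    exact this
  calc 2 * (∫ τ in t..(t + Δt), fa τ) + 2 * (∫ τ in t..(t + Δt), fb τ)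
        + (inner ℝ (x t) (mv Pplus (x t)) : ℝ)
        - (inner ℝ (x (t + Δt)) (mv Pplus (x (t + Δt))) : ℝ)
      = (∫ τ in t..(t + Δt), (2 * fa τ + 2 * fb τ - d τ)) := by
        rw [intervalIntegral.integral_sub ((hfaI.const_mul 2).add (hfbI.const_mul 2)) hdI,
          intervalIntegral.integral_add (hfaI.const_mul 2) (hfbI.const_mul 2),
          intervalIntegral.integral_const_mul, intervalIntegral.integral_const_mul, hftc]
        ring
    _ = ∫ τ in t..(t + Δt), fc τ := intervalIntegral.integral_congr hpt
end
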